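/- Let F : 2^V → ℝ be submodular with F(∅)=0. The minimizer of ∑_{i∈V} log(1 + exp(−s_i)) over s ∈ B(F) coincides with the minimizer of ∑_{i∈V} s_i^2 over s ∈ B(F) (the minimum norm point of the base polytope). -/

import Mathlib

/-- A set function is submodular iff it has diminishing marginal gains. -/
def Submodular {V : Type*} [DecidableEq V] (F : Finset V → ℝ) : Prop :=
  ∀ A B : Finset V, A ⊆ B → ∀ x ∉ B,
    F (insert x B) - F B ≤ F (insert x A) - F A

/-- The base polytope `B(F)` of a normalized submodular function. -/
def basePolytope {V : Type*} [Fintype V] [DecidableEq V] (F : Finset V → ℝ) :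
    Set (V → ℝ) :=
  {s | (∀ A : Finset V, ∑ i ∈ A, s i ≤ F A) ∧ ∑ i : V, s i = F Finset.univ}

section Aux

open Finset

variable {V : Type*} [Fintype V] [DecidableEq V] (F : Finset V → ℝ)

lemma submod_claim (hsub : Submodular F) :
    ∀ C A B : Finset V, A ⊆ B → Disjoint C B → F (B ∪ C) + F A ≤ F (A ∪ C) + F B := by
  intro C
  induction C using Finset.induction_on with
  | empty => intro A B _ _; simp [add_comm]
  | @insert x C hxC ih =>
    intro A B hAB hdis
    rw [Finset.disjoint_insert_left] at hdis
    have hxBC : x ∉ B ∪ C := by simp [hdis.1, hxC]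
    have h1 := hsub (A ∪ C) (B ∪ C) (Finset.union_subset_union hAB (subset_refl C)) x hxBC
    have h2 := ih A B hAB hdis.2
    have e1 : B ∪ insert x C = insert x (B ∪ C) := Finset.union_insert _ _ _
    have e2 : A ∪ insert x C = insert x (A ∪ C) := Finset.union_insert _ _ _
    rw [e1, e2]
    linarith

lemma submod_ui (hsub : Submodular F) (A B : Finset V) :
    F (A ∪ B) + F (A ∩ B) ≤ F A + F B := by
  have h := submod_claim F hsub (A \ B) (A ∩ B) B Finset.inter_subset_right sdiff_disjoint
  have e1 : B ∪ A \ B = A ∪ B := by ext x; simp; tauto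
  have e2 : A ∩ B ∪ A \ B = A := by ext x; simp; tauto
  rw [e1, e2] at h; linarith

def IsTight (s : V → ℝ) (A : Finset V) : Prop := ∑ i ∈ A, s i = F A

lemma tight_union_inter (hsub : Submodular F) {s : V → ℝ} (hs : s ∈ basePolytope F)
    {A B : Finset V} (hA : IsTight F s A) (hB : IsTight F s B) :
    IsTight F s (A ∪ B) ∧ IsTight F s (A ∩ B) := by
  have hsum : ∑ i ∈ A ∪ B, s i + ∑ i ∈ A ∩ B, s i = ∑ i ∈ A, s i + ∑ i ∈ B, s i :=
    Finset.sum_union_inter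
  have h1 := hs.1 (A ∪ B)
  have h2 := hs.1 (A ∩ B)
  have h3 := submod_ui F hsub A B
  unfold IsTight at *
  constructor <;> linarith

lemma mem_inf_finsets (S : Finset (Finset V)) (x : V) :
    x ∈ S.inf id ↔ ∀ B ∈ S, x ∈ B := by
  induction S using Finset.induction_on with
  | empty => simp [Finset.top_eq_univ]
  | @insert a S ha ih => simp [Finset.inf_insert, ih, Finset.inf_eq_inter]

lemma tight_inf (hsub : Submodular F) {s : V → ℝ} (hs : s ∈ basePolytope F)
    (S : Finset (Finset V)) (hT : ∀ B ∈ S, IsTight F s B) : IsTight F s (S.inf id) := by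
  induction S using Finset.induction_on with
  | empty =>
    simp only [Finset.inf_empty, Finset.top_eq_univ]
    exact hs.2
  | @insert a S ha ih =>
    rw [Finset.inf_insert, Finset.inf_eq_inter]
    exact (tight_union_inter F hsub hs (hT a (mem_insert_self a S))
      (ih (fun B hB => hT B (mem_insert_of_mem hB)))).2

lemma tight_sup (hsub : Submodular F) (hF0 : F ∅ = 0) {s : V → ℝ} (hs : s ∈ basePolytope F)
    {ι : Type*} [DecidableEq ι] (S : Finset ι) (f : ι → Finset V)
    (hT : ∀ i ∈ S, IsTight F s (f i)) : IsTight F s (S.sup f) := by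
  induction S using Finset.induction_on with
  | empty =>
    simp only [Finset.sup_empty, Finset.bot_eq_empty]
    unfold IsTight; simp [hF0]
  | @insert a S ha ih =>
    rw [Finset.sup_insert, Finset.sup_eq_union]
    exact (tight_union_inter F hsub hs (hT a (mem_insert_self a S))
      (ih (fun i hi => hT i (mem_insert_of_mem hi)))).1

lemma exists_exchange_pair (hsub : Submodular F) (hF0 : F ∅ = 0) {s : V → ℝ}
    (hs : s ∈ basePolytope F) (A : Finset V) (hA : ∑ i ∈ A, s i ≠ F A) :
    ∃ i ∈ A, ∃ j, j ∉ A ∧ ∀ B : Finset V, i ∈ B → j ∉ B → ¬ IsTight F s B := by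
  classical
  by_contra hc
  push_neg at hc
  -- hc : ∀ i ∈ A, ∀ j, j ∉ A → ∃ B, i ∈ B ∧ j ∉ B ∧ IsTight F s B
  have hAne : A.Nonempty := by
    rcases A.eq_empty_or_nonempty with h | h
    · exfalso; apply hA; rw [h]; simp [hF0]
    · exact h
  set D : V → Finset V := fun i =>
    ((Finset.univ : Finset (Finset V)).filter (fun B => IsTight F s B ∧ i ∈ B)).inf id with hD
  have hDtight : ∀ i, IsTight F s (D i) := by
    intro i
    apply tight_inf F hsub hs
    intro B hB
    exact ((Finset.mem_filter.mp hB).2).1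
  have hiD : ∀ i, i ∈ D i := by
    intro i
    rw [mem_inf_finsets]
    intro B hB
    exact ((Finset.mem_filter.mp hB).2).2
  have hDA : ∀ i ∈ A, D i ⊆ A := by
    intro i hi x hx
    by_contra hxA
    obtain ⟨B, hiB, hxB, hBt⟩ := hc i hi x hxA
    have hBmem : B ∈ (Finset.univ : Finset (Finset V)).filter (fun B => IsTight F s B ∧ i ∈ B) :=
      Finset.mem_filter.mpr ⟨Finset.mem_univ _, hBt, hiB⟩
    exact hxB ((mem_inf_finsets _ x).mp hx B hBmem)
  -- now A is the union of the D i, i ∈ A, hence tight: contradiction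
  have hsup : IsTight F s (A.sup D) :=
    tight_sup F hsub hF0 hs A D (fun i hi => hDtight i)
  have hEq : A.sup D = A := by
    apply Finset.Subset.antisymm
    · exact Finset.sup_le (fun i hi => hDA i hi)
    · intro x hx
      exact Finset.mem_of_subset (Finset.le_sup hx) (hiD x)
  rw [hEq] at hsup
  exact hA hsup

lemma exchange_mem {s : V → ℝ} (hs : s ∈ basePolytope F) (i j : V) (hij : i ≠ j)
    (hnt : ∀ B : Finset V, i ∈ B → j ∉ B → ∑ k ∈ B, s k < F B) :
    ∃ ε > 0, ∀ δ : ℝ, 0 < δ → δ ≤ ε →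
      (fun k => s k + (if k = i then δ else 0) - (if k = j then δ else 0)) ∈ basePolytope F := by
  classical
  set 𝒜 := (Finset.univ : Finset (Finset V)).filter (fun B => i ∈ B ∧ j ∉ B) with h𝒜
  have h1 : ({i} : Finset V) ∈ 𝒜 := by
    simp [h𝒜, Finset.mem_filter]
    exact fun h => hij h.symm
  have hne : (𝒜.image fun B => F B - ∑ k ∈ B, s k).Nonempty :=
    ⟨_, Finset.mem_image_of_mem _ h1⟩
  set ε := (𝒜.image fun B => F B - ∑ k ∈ B, s k).min' hne with hε
  have hεpos : 0 < ε := by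
    have hmem := (𝒜.image fun B => F B - ∑ k ∈ B, s k).min'_mem hne
    rw [← hε] at hmem
    obtain ⟨B, hB, hBe⟩ := Finset.mem_image.mp hmem
    obtain ⟨hiB, hjB⟩ := (Finset.mem_filter.mp hB).2
    have := hnt B hiB hjB
    rw [← hBe]; linarith
  refine ⟨ε, hεpos, ?_⟩
  intro δ hδ0 hδε
  have hsplit : ∀ B : Finset V,
      ∑ k ∈ B, (s k + (if k = i then δ else 0) - (if k = j then δ else 0))
        = ∑ k ∈ B, s k + (if i ∈ B then δ else 0) - (if j ∈ B then δ else 0) := by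
    intro B
    rw [show (fun k => s k + (if k = i then δ else 0) - (if k = j then δ else 0))
      = fun k => s k + ((if k = i then δ else 0) - (if k = j then δ else 0)) from by
        funext k; ring]
    rw [Finset.sum_add_distrib, Finset.sum_sub_distrib,
      Finset.sum_ite_eq' B i (fun _ => δ), Finset.sum_ite_eq' B j (fun _ => δ)]
    ring
  constructor
  · intro B
    rw [hsplit B]
    by_cases hiB : i ∈ B <;> by_cases hjB : j ∈ B <;> simp [hiB, hjB]
    · -- i ∈ B, j ∈ B
      have := hs.1 B; linarith
    · -- i ∈ B, j ∉ B : the critical case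
      have hBA : B ∈ 𝒜 := Finset.mem_filter.mpr ⟨Finset.mem_univ _, hiB, hjB⟩
      have hmin : ε ≤ F B - ∑ k ∈ B, s k :=
        Finset.min'_le _ _ (Finset.mem_image_of_mem _ hBA)
      linarith
    · have := hs.1 B; linarith
    · exact hs.1 B
  · rw [hsplit Finset.univ]
    simp [hs.2]

lemma abel_lemma (hF0 : F ∅ = 0) :
    ∀ (n : ℕ) (w z s : V → ℝ), (Finset.univ.image w).card ≤ n →
    (∀ A : Finset V, ∑ i ∈ A, z i ≤ F A) → (∑ i : V, z i = F Finset.univ) →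
    (∀ c : ℝ, ∑ i ∈ Finset.univ.filter (fun i => w i ≤ c), s i
        = F (Finset.univ.filter (fun i => w i ≤ c))) →
    (∑ i : V, s i = F Finset.univ) →
    ∑ i : V, w i * s i ≤ ∑ i : V, w i * z i := by
  intro n
  induction n with
  | zero =>
    intro w z s hcard _ _ _ _
    have himg : (Finset.univ.image w) = ∅ := Finset.card_eq_zero.mp (Nat.le_zero.mp hcard)
    have huniv : (Finset.univ : Finset V) = ∅ := by
      by_contra h
      obtain ⟨x, hx⟩ := Finset.nonempty_iff_ne_empty.mpr h
      have : w x ∈ Finset.univ.image w := Finset.mem_image_of_mem w hx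
      rw [himg] at this; exact absurd this (Finset.notMem_empty _)
    rw [huniv]; simp
  | succ n ih =>
    intro w z s hcard hz1 hz2 hts hs2
    by_cases hc : (Finset.univ.image w).card ≤ n
    · exact ih w z s hc hz1 hz2 hts hs2
    have hne : (Finset.univ.image w).Nonempty := by
      rw [← Finset.card_pos]; omega
    set m := (Finset.univ.image w).min' hne with hm
    have hm_le : ∀ i : V, m ≤ w i := fun i =>
      Finset.min'_le _ _ (Finset.mem_image_of_mem w (Finset.mem_univ i))
    set A := Finset.univ.filter (fun i => w i ≤ m) with hA
    by_cases hAu : A = Finset.univ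
    · -- w is constant ≡ m
      have hw : ∀ i : V, w i = m := by
        intro i
        have hiA : i ∈ A := hAu ▸ Finset.mem_univ i
        exact le_antisymm ((Finset.mem_filter.mp hiA).2) (hm_le i)
      apply le_of_eq
      calc ∑ i : V, w i * s i = m * ∑ i : V, s i := by
              rw [Finset.mul_sum]; exact Finset.sum_congr rfl (fun i _ => by rw [hw i])
        _ = m * ∑ i : V, z i := by rw [hs2, hz2]
        _ = ∑ i : V, w i * z i := by
              rw [Finset.mul_sum]; exact Finset.sum_congr rfl (fun i _ => by rw [hw i])
    · -- proper lower level set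
      have hAc : (Finset.univ \ A).Nonempty := by
        rw [Finset.sdiff_nonempty]
        intro h
        exact hAu (Finset.Subset.antisymm (Finset.subset_univ A) h)
      set m' := ((Finset.univ \ A).image w).min' (hAc.image w) with hm'
      obtain ⟨j0, hj0, hj0w⟩ : ∃ j ∈ Finset.univ \ A, w j = m' := by
        have := ((Finset.univ \ A).image w).min'_mem (hAc.image w)
        rw [← hm'] at this
        obtain ⟨j, hj, hje⟩ := Finset.mem_image.mp this
        exact ⟨j, hj, hje⟩
      have hmm' : m < m' := by
        have : j0 ∉ A := (Finset.mem_sdiff.mp hj0).2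
        have hj0m : ¬ w j0 ≤ m := by
          intro h; exact this (Finset.mem_filter.mpr ⟨Finset.mem_univ _, h⟩)
        rw [← hj0w]; exact lt_of_not_ge hj0m
      have hout : ∀ i : V, i ∉ A → m' ≤ w i := fun i hi =>
        Finset.min'_le _ _ (Finset.mem_image_of_mem w (Finset.mem_sdiff.mpr ⟨Finset.mem_univ i, hi⟩))
      set w' := fun i => if w i ≤ m then m' else w i with hw'
      have himg : Finset.univ.image w' ⊆ (Finset.univ.image w).erase m := by
        intro v hv
        obtain ⟨i, _, rfl⟩ := Finset.mem_image.mp hv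
        by_cases hi : w i ≤ m
        · have : w' i = m' := by simp [hw', hi]
          rw [this]
          exact Finset.mem_erase.mpr ⟨(ne_of_lt hmm').symm,
            by rw [← hj0w]; exact Finset.mem_image_of_mem w (Finset.mem_univ j0)⟩
        · have : w' i = w i := by simp [hw', hi]
          rw [this]
          exact Finset.mem_erase.mpr ⟨fun h => hi (le_of_eq h),
            Finset.mem_image_of_mem w (Finset.mem_univ i)⟩
      have hcard' : (Finset.univ.image w').card ≤ n := by
        have h1 := Finset.card_le_card himg
        have h2 : ((Finset.univ.image w).erase m).card = (Finset.univ.image w).card - 1 :=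
          Finset.card_erase_of_mem (Finset.min'_mem _ hne)
        omega
      have hts' : ∀ c : ℝ, ∑ i ∈ Finset.univ.filter (fun i => w' i ≤ c), s i
          = F (Finset.univ.filter (fun i => w' i ≤ c)) := by
        intro c
        by_cases hc' : m' ≤ c
        · have heq : Finset.univ.filter (fun i => w' i ≤ c)
              = Finset.univ.filter (fun i => w i ≤ c) := by
            apply Finset.filter_congr
            intro i _
            by_cases hi : w i ≤ m
            · simp only [hw', hi, if_true]
              constructor <;> intro <;> [linarith; exact hc']
            · simp [hw', hi]
          rw [heq]; exact hts c
        · have heq : Finset.univ.filter (fun i => w' i ≤ c) = ∅ := by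
            apply Finset.filter_false_of_mem
            intro i _
            by_cases hi : w i ≤ m
            · simp only [hw', hi, if_true]; linarith
            · simp only [hw', hi, if_false]
              have := hout i (fun h => hi (Finset.mem_filter.mp h).2)
              intro h; exact hc' (le_trans this h)
          rw [heq]; simp [hF0]
      have hIH := ih w' z s hcard' hz1 hz2 hts' hs2
      -- decomposition of the inner products
      have hdecomp : ∀ t : V → ℝ,
          ∑ i : V, w i * t i = ∑ i : V, w' i * t i + (m - m') * ∑ i ∈ A, t i := by
        intro t
        have hptw : ∀ i : V, w i * t i
            = w' i * t i + (if i ∈ A then (m - m') * t i else 0) := by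
          intro i
          by_cases hi : w i ≤ m
          · have hwi : w i = m := le_antisymm hi (hm_le i)
            have hiA : i ∈ A := Finset.mem_filter.mpr ⟨Finset.mem_univ _, hi⟩
            simp only [hw', hwi, le_refl, if_true, hiA]; ring
          · have hiA : i ∉ A := fun h => hi (Finset.mem_filter.mp h).2
            simp [hw', hi, hiA]
        rw [Finset.sum_congr rfl (fun i _ => hptw i), Finset.sum_add_distrib]
        congr 1
        rw [Finset.sum_ite_mem, Finset.univ_inter, Finset.mul_sum]
      have hzA := hz1 A
      have hsA := hts m
      rw [← hA] at hsA
      have hkey : (m - m') * F A ≤ (m - m') * ∑ i ∈ A, z i :=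
        mul_le_mul_of_nonpos_left hzA (by linarith)
      have d1 := hdecomp s
      have d2 := hdecomp z
      rw [hsA] at d1
      linarith

-- MVT-based gradient inequality
lemma grad_ineq (g φ : ℝ → ℝ) (hd : ∀ x, HasDerivAt g (φ x) x) (hφ : Monotone φ)
    (x y : ℝ) : g x + φ x * (y - x) ≤ g y := by
  rcases lt_trichotomy x y with h | h | h
  · obtain ⟨c, hc, hslope⟩ := exists_hasDerivAt_eq_slope g φ h
      (fun t _ => (hd t).continuousAt.continuousWithinAt) (fun t _ => hd t)
    have hne : y - x ≠ 0 := by intro h'; rw [sub_eq_zero] at h'; exact absurd h'.symm (ne_of_lt h)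
    have h1 : g y - g x = φ c * (y - x) := by
      field_simp [hne] at hslope; linarith [hslope]
    have h2 : φ x ≤ φ c := hφ (le_of_lt hc.1)
    nlinarith [h1, h2, sub_pos.mpr h]
  · simp [h]
  · obtain ⟨c, hc, hslope⟩ := exists_hasDerivAt_eq_slope g φ h
      (fun t _ => (hd t).continuousAt.continuousWithinAt) (fun t _ => hd t)
    have hne : x - y ≠ 0 := by intro h'; rw [sub_eq_zero] at h'; exact absurd h'.symm (ne_of_lt h)
    have h1 : g x - g y = φ c * (x - y) := by
      field_simp [hne] at hslope; linarith [hslope]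
    have h2 : φ c ≤ φ x := hφ (le_of_lt hc.2)
    nlinarith [h1, h2, sub_pos.mpr h]

-- strict convexity pair inequality
lemma strict_pair (g φ : ℝ → ℝ) (hd : ∀ x, HasDerivAt g (φ x) x) (hφ : StrictMono φ)
    (a b δ : ℝ) (hab : a < b) (hδ : 0 < δ) (hδ2 : δ ≤ (b - a) / 2) :
    g (a + δ) + g (b - δ) < g a + g b := by
  have h1 : a < a + δ := by linarith
  have h2 : b - δ < b := by linarith
  obtain ⟨c1, hc1, hs1⟩ := exists_hasDerivAt_eq_slope g φ h1
    (fun t _ => (hd t).continuousAt.continuousWithinAt) (fun t _ => hd t)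
  obtain ⟨c2, hc2, hs2⟩ := exists_hasDerivAt_eq_slope g φ h2
    (fun t _ => (hd t).continuousAt.continuousWithinAt) (fun t _ => hd t)
  have e1 : g (a + δ) - g a = φ c1 * δ := by
    have : a + δ - a = δ := by ring
    rw [this] at hs1; field_simp at hs1; linarith [hs1]
  have e2 : g b - g (b - δ) = φ c2 * δ := by
    have : b - (b - δ) = δ := by ring
    rw [this] at hs2; field_simp at hs2; linarith [hs2]
  have hcc : c1 < c2 := by
    have := hc1.2; have := hc2.1; linarith
  have := hφ hcc
  nlinarith

-- logistic derivative
lemma logistic_deriv (x : ℝ) :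
    HasDerivAt (fun x : ℝ => Real.log (1 + Real.exp (-x))) (-(1 + Real.exp x)⁻¹) x := by
  have h1 : HasDerivAt (fun x : ℝ => -x) (-1) x := (hasDerivAt_id x).neg
  have h2 : HasDerivAt (fun x : ℝ => Real.exp (-x)) (-Real.exp (-x)) x := by
    exact ((Real.hasDerivAt_exp (-x)).comp x h1).congr_deriv (by ring)
  have h3 : HasDerivAt (fun x : ℝ => 1 + Real.exp (-x)) (-Real.exp (-x)) x :=
    h2.const_add 1
  have hpos : (0:ℝ) < 1 + Real.exp (-x) := by positivity
  have h4 := h3.log (ne_of_gt hpos)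
  convert h4 using 1
  have hx : Real.exp (-x) * Real.exp x = 1 := by
    rw [← Real.exp_add]; simp
  have hpos2 : (0:ℝ) < 1 + Real.exp x := by positivity
  field_simp
  nlinarith [hx]

lemma logistic_mono : StrictMono (fun x : ℝ => -(1 + Real.exp x)⁻¹) := by
  intro a b hab
  have h1 : (0:ℝ) < 1 + Real.exp a := by positivity
  have h2 : (1:ℝ) + Real.exp a < 1 + Real.exp b := by
    simpa using Real.exp_lt_exp.mpr hab
  simp only [neg_lt_neg_iff]
  exact inv_strictAnti₀ h1 h2

lemma sq_deriv (x : ℝ) : HasDerivAt (fun x : ℝ => x ^ 2) (2 * x) x := by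
  simpa using hasDerivAt_pow 2 x

lemma sq_mono : StrictMono (fun x : ℝ => 2 * x) := fun a b h => by dsimp; linarith

lemma min_iff_tight (hsub : Submodular F) (hF0 : F ∅ = 0)
    (g φ : ℝ → ℝ) (hd : ∀ x, HasDerivAt g (φ x) x) (hφ : StrictMono φ)
    (s : V → ℝ) (hs : s ∈ basePolytope F) :
    (∀ z ∈ basePolytope F, ∑ i : V, g (s i) ≤ ∑ i : V, g (z i)) ↔
    (∀ c : ℝ, ∑ i ∈ Finset.univ.filter (fun i => s i ≤ c), s i
        = F (Finset.univ.filter (fun i => s i ≤ c))) := by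
  classical
  constructor
  · -- minimizer ⇒ lower level sets tight
    intro hmin c
    by_contra hA
    obtain ⟨i, hiA, j, hjA, hkey⟩ := exists_exchange_pair F hsub hF0 hs _ hA
    have hsi : s i ≤ c := (Finset.mem_filter.mp hiA).2
    have hsj : c < s j := lt_of_not_ge (fun h => hjA (Finset.mem_filter.mpr ⟨Finset.mem_univ _, h⟩))
    have hij : i ≠ j := fun h => hjA (h ▸ hiA)
    have hnt : ∀ B : Finset V, i ∈ B → j ∉ B → ∑ k ∈ B, s k < F B := fun B hi hj =>
      lt_of_le_of_ne (hs.1 B) (hkey B hi hj)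
    obtain ⟨ε, hεpos, hmem⟩ := exchange_mem F hs i j hij hnt
    set δ := min ε ((s j - s i) / 2) with hδ
    have hδpos : 0 < δ := lt_min hεpos (by linarith)
    have hδε : δ ≤ ε := min_le_left _ _
    have hδ2 : δ ≤ (s j - s i) / 2 := min_le_right _ _
    set z : V → ℝ := fun k => s k + (if k = i then δ else 0) - (if k = j then δ else 0) with hz
    have hzBP : z ∈ basePolytope F := hmem δ hδpos hδε
    have hzi : z i = s i + δ := by simp [hz, hij]
    have hzj : z j = s j - δ := by simp [hz, hij.symm]
    have hzk : ∀ k : V, k ≠ i → k ≠ j → z k = s k := by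
      intro k h1 h2; simp [hz, h1, h2]
    have hpair : g (z i) + g (z j) < g (s i) + g (s j) := by
      rw [hzi, hzj]
      exact strict_pair g φ hd hφ (s i) (s j) δ (by linarith) hδpos hδ2
    have hsum : ∑ k : V, (g (z k) - g (s k)) = (g (z i) - g (s i)) + (g (z j) - g (s j)) := by
      rw [← Finset.sum_subset (Finset.subset_univ ({i, j} : Finset V))
        (fun k _ hk => by
          simp only [Finset.mem_insert, Finset.mem_singleton] at hk
          push_neg at hk
          rw [hzk k hk.1 hk.2, sub_self])]
      rw [Finset.sum_pair hij]
    have hlt : ∑ k : V, g (z k) < ∑ k : V, g (s k) := by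
      have := Finset.sum_sub_distrib (s := Finset.univ)
        (f := fun k : V => g (z k)) (g := fun k : V => g (s k))
      rw [this] at hsum
      linarith
    exact absurd (hmin z hzBP) (not_le.mpr hlt)
  · -- tight lower level sets ⇒ minimizer
    intro ht z hz
    have habel : ∑ i : V, φ (s i) * s i ≤ ∑ i : V, φ (s i) * z i := by
      apply abel_lemma F hF0 (Finset.univ.image (fun i => φ (s i))).card _ z s le_rfl hz.1 hz.2 _ hs.2
      intro c
      set B := Finset.univ.filter (fun i => φ (s i) ≤ c) with hB
      rcases B.eq_empty_or_nonempty with h | h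
      · rw [h]; simp [hF0]
      · obtain ⟨j, hjB, hmax⟩ := Finset.exists_max_image B s h
        have heq : B = Finset.univ.filter (fun i => s i ≤ s j) := by
          ext x
          simp only [hB, Finset.mem_filter, Finset.mem_univ, true_and]
          constructor
          · intro hx; exact hmax x (Finset.mem_filter.mpr ⟨Finset.mem_univ _, hx⟩)
          · intro hx
            exact le_trans (hφ.monotone hx) ((Finset.mem_filter.mp hjB).2)
        rw [heq]
        exact ht (s j)
    have hgrad : ∀ k : V, g (s k) + φ (s k) * (z k - s k) ≤ g (z k) := fun k =>
      grad_ineq g φ hd hφ.monotone (s k) (z k)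
    have h1 : ∑ k : V, (g (s k) + φ (s k) * (z k - s k)) ≤ ∑ k : V, g (z k) :=
      Finset.sum_le_sum (fun k _ => hgrad k)
    have h2 : ∑ k : V, (g (s k) + φ (s k) * (z k - s k))
        = ∑ k : V, g (s k) + (∑ k : V, φ (s k) * z k - ∑ k : V, φ (s k) * s k) := by
      rw [Finset.sum_add_distrib]
      congr 1
      rw [← Finset.sum_sub_distrib]
      exact Finset.sum_congr rfl (fun k _ => by ring)
    rw [h2] at h1
    linarith

end Aux

/-- The minimizer of `∑ log(1+exp(-sᵢ))` over `B(F)` coincides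
with the minimizer of `∑ sᵢ²` over `B(F)` (the minimum norm point). -/
theorem stmt_4 {V : Type*} [Fintype V] [DecidableEq V]
    (F : Finset V → ℝ) (hsub : Submodular F) (hF0 : F ∅ = 0)
    (s : V → ℝ) (hs : s ∈ basePolytope F) :
    ((∀ z ∈ basePolytope F,
        ∑ i : V, Real.log (1 + Real.exp (-(s i)))
          ≤ ∑ i : V, Real.log (1 + Real.exp (-(z i)))) ↔
     (∀ z ∈ basePolytope F, ∑ i : V, (s i) ^ 2 ≤ ∑ i : V, (z i) ^ 2)) := by
  have h1 := min_iff_tight F hsub hF0 (fun x => Real.log (1 + Real.exp (-x)))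
    (fun x => -(1 + Real.exp x)⁻¹) logistic_deriv logistic_mono s hs
  have h2 := min_iff_tight F hsub hF0 (fun x => x ^ 2) (fun x => 2 * x)
    sq_deriv sq_mono s hs
  exact h1.trans h2.symm
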